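/- Joint pgf: let N ~ MPMRF(λ, α, T), choose any root r ∈ V, and adopt the convention α_{(pa(r),r)} = 0. Then for all t = (t_v)_{v∈V} ∈ [−1,1]^V, E[∏_{v∈V} t_v^{N_v}] = ∏_{v∈V} exp( λ(1 − α_{(pa(v),v)}) (η_v(t) − 1) ), where the polynomials η_v are defined recursively from the leaves of the rooted tree by η_v(t) = t_v ∏_{j∈ch(v)} (1 − α_{(v,j)} + α_{(v,j)} η_j(t)), with η_v(t) = t_v when v has no children. -/

import Mathlib

open MeasureTheory ProbabilityTheory
open scoped ProbabilityTheory

/-- The Poisson probability mass function with mean `lam`, evaluated at `k`. -/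
noncomputable def poissonProb (lam : ℝ) (k : ℕ) : ℝ :=
  Real.exp (-lam) * lam ^ k / (Nat.factorial k)

/-- The MPMRF construction: a tree-structured Markov random field with Poisson(`lam`)
marginals, built on a tree `G` rooted at `root` via the stochastic representation
`N_root = L_root` and `N_v = α_{(pa v, v)} ∘ N_{pa v} + L_v` for `v ≠ root`, where `∘`
denotes binomial thinning (realized through the i.i.d. Bernoulli indicators `I v i`),
the innovations `L_v` are Poisson, and all innovations and indicator sequences are
mutually independent. -/
structure MPMRF {V : Type} [Fintype V] [DecidableEq V]
    (G : SimpleGraph V) (lam : ℝ) (alpha : Sym2 V → ℝ)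
    (Ω : Type) [MeasureSpace Ω] : Type where
  /-- the underlying graph is a tree -/
  isTree : G.IsTree
  lam_pos : 0 < lam
  alpha_mem : ∀ e ∈ G.edgeSet, alpha e ∈ Set.Icc (0 : ℝ) 1
  /-- the chosen root -/
  root : V
  /-- the parent function of the rooted tree -/
  pa : V → V
  pa_adj : ∀ v, v ≠ root → G.Adj (pa v) v
  pa_dist : ∀ v, v ≠ root → G.dist root (pa v) + 1 = G.dist root v
  /-- innovation random variables -/
  L : V → Ω → ℕ
  /-- Bernoulli indicators used in the binomial thinnings -/
  I : V → ℕ → Ω → ℕ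
  /-- the components of the Markov random field -/
  N : V → Ω → ℕ
  meas_L : ∀ v, Measurable (L v)
  meas_I : ∀ v i, Measurable (I v i)
  meas_N : ∀ v, Measurable (N v)
  I_le_one : ∀ v i ω, I v i ω ≤ 1
  I_bern : ∀ v, v ≠ root → ∀ i,
    ℙ {ω | I v i ω = 1} = ENNReal.ofReal (alpha s(pa v, v))
  L_root_poisson : ∀ k, ℙ {ω | L root ω = k} = ENNReal.ofReal (poissonProb lam k)
  L_poisson : ∀ v, v ≠ root → ∀ k,
    ℙ {ω | L v ω = k} =
      ENNReal.ofReal (poissonProb (lam * (1 - alpha s(pa v, v))) k)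
  /-- the innovations and all indicator variables are mutually independent -/
  indep : iIndepFun
    (Sum.elim L (fun p : V × ℕ => I p.1 p.2)) ℙ
  N_root : N root = L root
  N_rec : ∀ v, v ≠ root → ∀ ω,
    N v ω = (∑ i ∈ Finset.range (N (pa v) ω), I v i ω) + L v ω

set_option linter.unusedSectionVars false

/-! ### Auxiliary lemmas -/

lemma poissonProb_nonneg {lam : ℝ} (h : 0 ≤ lam) (k : ℕ) : 0 ≤ poissonProb lam k := by
  unfold poissonProb; positivity

lemma tsum_poisson_pgf {mu s : ℝ} :
    ∑' k : ℕ, poissonProb mu k * s ^ k = Real.exp (mu * (s - 1)) := by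
  have h1 : ∀ k : ℕ, poissonProb mu k * s ^ k
      = Real.exp (-mu) * ((mu * s) ^ k / (Nat.factorial k)) := by
    intro k; unfold poissonProb; rw [mul_pow]; ring
  rw [tsum_congr h1, tsum_mul_left]
  have h2 : ∑' k : ℕ, (mu * s) ^ k / (Nat.factorial k) = Real.exp (mu * s) := by
    rw [Real.exp_eq_exp_ℝ, NormedSpace.exp_eq_tsum_div]
  rw [h2, ← Real.exp_add]; ring_nf

lemma abs_pow_le_one {x : ℝ} (n : ℕ) (hx : |x| ≤ 1) : |x ^ n| ≤ 1 := by
  rw [abs_pow]; exact pow_le_one₀ (abs_nonneg x) hx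

lemma abs_prod_le_one {ι : Type*} (B : Finset ι) (g : ι → ℝ) (hg : ∀ j ∈ B, |g j| ≤ 1) :
    |∏ j ∈ B, g j| ≤ 1 := by
  rw [Finset.abs_prod]
  exact Finset.prod_le_one (fun i _ => abs_nonneg _) (fun i hi => hg i hi)

lemma measurable_nat_cases {Ω α : Type*} {m : MeasurableSpace Ω} [MeasurableSpace α]
    {K : Ω → ℕ} (hK : Measurable[m] K) {f : ℕ → Ω → α} (hf : ∀ k, Measurable[m] (f k)) :
    Measurable[m] (fun ω => f (K ω) ω) := by
  intro t ht
  have h : (fun ω => f (K ω) ω) ⁻¹' t = ⋃ k, (K ⁻¹' {k} ∩ f k ⁻¹' t) := by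
    ext ω
    simp only [Set.mem_preimage, Set.mem_iUnion, Set.mem_inter_iff, Set.mem_singleton_iff]
    exact ⟨fun h => ⟨K ω, rfl, h⟩, fun ⟨k, hk, h⟩ => hk ▸ h⟩
  rw [h]
  exact MeasurableSet.iUnion fun k => (hK (measurableSet_singleton k)).inter (hf k ht)

section Omega
variable {Ω : Type} [MeasureSpace Ω] [IsProbabilityMeasure (ℙ : Measure Ω)]

lemma indepFun_of_meas_le {m₁ m₂ : MeasurableSpace Ω} (h : Indep m₁ m₂ ℙ)
    {β γ : Type*} [mβ : MeasurableSpace β] [mγ : MeasurableSpace γ]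
    {f : Ω → β} {g : Ω → γ} (hf : Measurable[m₁] f) (hg : Measurable[m₂] g) :
    IndepFun f g ℙ := by
  rw [IndepFun_iff_Indep, Indep_iff]
  rw [Indep_iff] at h
  intro t1 t2 ht1 ht2
  exact h t1 t2 (measurable_iff_comap_le.mp hf t1 ht1) (measurable_iff_comap_le.mp hg t2 ht2)

lemma integrable_of_abs_le_one' {f : Ω → ℝ} (hf : AEStronglyMeasurable f ℙ)
    (hb : ∀ x, |f x| ≤ 1) : Integrable f ℙ :=
  (integrable_const (1 : ℝ)).mono' hf (ae_of_all _ (by simpa [Real.norm_eq_abs] using hb))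

lemma integral_pow_natRV {X : Ω → ℕ} (hX : Measurable X) {s : ℝ} (hs : |s| ≤ 1) :
    ∫ ω, s ^ X ω ∂ℙ = ∑' k, (ℙ {ω | X ω = k}).toReal * s ^ k := by
  have hb : ∀ n : ℕ, |s ^ n| ≤ 1 := fun n => abs_pow_le_one n hs
  have hmeas : Measurable fun n : ℕ => s ^ n := measurable_of_countable _
  have : IsProbabilityMeasure (Measure.map X ℙ) := Measure.isProbabilityMeasure_map hX.aemeasurable
  have hmap : ∫ ω, s ^ X ω ∂ℙ = ∫ n, s ^ n ∂(Measure.map X ℙ) :=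
    (integral_map hX.aemeasurable hmeas.aestronglyMeasurable).symm
  have hint : Integrable (fun n : ℕ => s ^ n) (Measure.map X ℙ) :=
    (integrable_const (1 : ℝ)).mono' hmeas.aestronglyMeasurable
      (ae_of_all _ (by simpa [Real.norm_eq_abs] using hb))
  rw [hmap, integral_countable' hint]
  refine tsum_congr fun n => ?_
  rw [map_measureReal_apply hX (measurableSet_singleton n)]
  have h2 : X ⁻¹' {n} = {ω | X ω = n} := by ext ω; simp [Set.mem_preimage]
  rw [h2, smul_eq_mul, measureReal_def]

lemma integral_pow_poisson {X : Ω → ℕ} (hX : Measurable X) {mu : ℝ} (hmu : 0 ≤ mu)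
    (hpmf : ∀ k, ℙ {ω | X ω = k} = ENNReal.ofReal (poissonProb mu k))
    {s : ℝ} (hs : |s| ≤ 1) :
    ∫ ω, s ^ X ω ∂ℙ = Real.exp (mu * (s - 1)) := by
  rw [integral_pow_natRV hX hs, ← tsum_poisson_pgf]
  refine tsum_congr fun k => ?_
  rw [hpmf k, ENNReal.toReal_ofReal (poissonProb_nonneg hmu k)]

lemma integral_pow_bern {X : Ω → ℕ} (hX : Measurable X) (hle : ∀ ω, X ω ≤ 1)
    {a : ℝ} (ha : a ∈ Set.Icc (0 : ℝ) 1)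
    (h1 : ℙ {ω | X ω = 1} = ENNReal.ofReal a) {s : ℝ} (hs : |s| ≤ 1) :
    ∫ ω, s ^ X ω ∂ℙ = 1 - a + a * s := by
  rw [integral_pow_natRV hX hs]
  have hzero : ∀ k : ℕ, k ∉ ({0, 1} : Finset ℕ) → (ℙ {ω | X ω = k}).toReal * s ^ k = 0 := by
    intro k hk
    simp only [Finset.mem_insert, Finset.mem_singleton] at hk
    push_neg at hk
    have h : {ω | X ω = k} = (∅ : Set Ω) := by
      ext ω; simp only [Set.mem_setOf_eq, Set.mem_empty_iff_false, iff_false]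
      intro h; have := hle ω; omega
    rw [h]; simp
  rw [tsum_eq_sum hzero]
  have h0 : {ω | X ω = 0} = {ω | X ω = 1}ᶜ := by
    ext ω; simp only [Set.mem_setOf_eq, Set.mem_compl_iff]
    have := hle ω; omega
  have hm1 : MeasurableSet {ω | X ω = 1} := hX (measurableSet_singleton 1)
  have hP0 : ℙ {ω | X ω = 0} = 1 - ENNReal.ofReal a := by
    rw [h0, measure_compl hm1 (measure_ne_top _ _), h1, measure_univ]
  have ht1 : (ℙ {ω | X ω = 1}).toReal = a := by rw [h1, ENNReal.toReal_ofReal ha.1]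
  have ht0 : (ℙ {ω | X ω = 0}).toReal = 1 - a := by
    rw [hP0, ENNReal.toReal_sub_of_le (ENNReal.ofReal_le_one.mpr ha.2) (by norm_num),
      ENNReal.toReal_ofReal ha.1]
    norm_num
  simp [Finset.sum_insert, ht0, ht1]

lemma integral_finset_prod_indep {ι : Type*} {φ : ι → Ω → ℝ}
    (h : iIndepFun φ ℙ) (hm : ∀ j, Measurable (φ j))
    (hb : ∀ j ω, |φ j ω| ≤ 1) (s : Finset ι) :
    ∫ ω, ∏ j ∈ s, φ j ω ∂ℙ = ∏ j ∈ s, ∫ ω, φ j ω ∂ℙ := by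
  classical
  induction s using Finset.induction_on with
  | empty => simp
  | @insert j s hj ih =>
    have hprodmeas : Measurable fun ω => ∏ i ∈ s, φ i ω :=
      Finset.measurable_prod s (fun i _ => hm i)
    have hprodbd : ∀ ω, |∏ i ∈ s, φ i ω| ≤ 1 := fun ω =>
      abs_prod_le_one s _ (fun i _ => hb i ω)
    have hfg : IndepFun (∏ i ∈ s, φ i) (φ j) ℙ :=
      h.indepFun_finsetProd_of_notMem hm hj
    have heq2 : (∏ i ∈ s, φ i) = fun ω => ∏ i ∈ s, φ i ω := by
      funext ω; exact Finset.prod_apply ω s φ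
    have hint1 : Integrable (∏ i ∈ s, φ i) ℙ := by
      rw [heq2]
      exact integrable_of_abs_le_one' hprodmeas.aestronglyMeasurable hprodbd
    have hint2 : Integrable (φ j) ℙ :=
      integrable_of_abs_le_one' (hm j).aestronglyMeasurable (hb j)
    simp_rw [Finset.prod_insert hj]
    rw [← ih]
    have h3 := hfg.integral_mul_eq_mul_integral hint1.aestronglyMeasurable hint2.aestronglyMeasurable
    have heq : ((∏ i ∈ s, φ i) * φ j) = fun ω => (∏ i ∈ s, φ i ω) * φ j ω := by
      funext ω; simp [Finset.prod_apply]
    rw [heq, heq2] at h3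
    calc ∫ ω, φ j ω * ∏ i ∈ s, φ i ω ∂ℙ
        = ∫ ω, (∏ i ∈ s, φ i ω) * φ j ω ∂ℙ := by congr 1; funext ω; ring
      _ = (∫ ω, ∏ i ∈ s, φ i ω ∂ℙ) * ∫ ω, φ j ω ∂ℙ := h3
      _ = (∫ ω, φ j ω ∂ℙ) * ∫ ω, ∏ i ∈ s, φ i ω ∂ℙ := by ring

lemma integral_eq_tsum_fiber {K : Ω → ℕ} (hK : Measurable K) {f : Ω → ℝ}
    (hf : Integrable f ℙ) :
    ∫ ω, f ω ∂ℙ = ∑' k, ∫ ω in K ⁻¹' {k}, f ω ∂ℙ := by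
  have hu : (⋃ k, K ⁻¹' {k}) = Set.univ := by ext ω; simp
  have hd : Pairwise (Function.onFun Disjoint fun k => K ⁻¹' {k}) := by
    intro i j hij
    rw [Function.onFun, Set.disjoint_left]
    rintro ω hi hj
    simp only [Set.mem_preimage, Set.mem_singleton_iff] at hi hj
    exact hij (hi ▸ hj ▸ rfl)
  have h := integral_iUnion (fun k => hK (measurableSet_singleton k)) hd
    (hu ▸ hf.integrableOn : IntegrableOn f (⋃ k, K ⁻¹' {k}) ℙ)
  rw [hu] at h
  rw [← h, setIntegral_univ]

end Omega

def mpVtx {V : Type} : V ⊕ V × ℕ → V := Sum.elim id Prod.fst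

section MP
variable {V : Type} [Fintype V] [DecidableEq V] {G : SimpleGraph V} {lam : ℝ}
  {alpha : Sym2 V → ℝ} {Ω : Type} [MeasureSpace Ω] [IsProbabilityMeasure (ℙ : Measure Ω)]
  (M : MPMRF G lam alpha Ω)

/-- the combined family of innovations and indicators -/
noncomputable def MPMRF.fam : V ⊕ V × ℕ → Ω → ℕ := Sum.elim M.L fun p => M.I p.1 p.2

lemma MPMRF.meas_fam : ∀ j, Measurable (M.fam j) := by
  rintro (u | ⟨u, i⟩)
  · exact M.meas_L u
  · exact M.meas_I u i

lemma MPMRF.indep_fam : iIndepFun M.fam ℙ := M.indep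

/-- σ-algebra generated by the variables attached to vertices other than `w` -/
noncomputable def MPMRF.mT (w : V) : MeasurableSpace Ω :=
  ⨆ j ∈ {j : V ⊕ V × ℕ | mpVtx j ≠ w}, MeasurableSpace.comap (M.fam j) inferInstance

/-- σ-algebra generated by the variables attached to vertex `w` -/
noncomputable def MPMRF.mS (w : V) : MeasurableSpace Ω :=
  ⨆ j ∈ {j : V ⊕ V × ℕ | mpVtx j = w}, MeasurableSpace.comap (M.fam j) inferInstance

lemma MPMRF.meas_fam_mT {w : V} {j : V ⊕ V × ℕ} (hj : mpVtx j ≠ w) :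
    Measurable[M.mT w] (M.fam j) :=
  measurable_iff_comap_le.mpr
    (le_iSup₂ (f := fun j (_ : j ∈ {j : V ⊕ V × ℕ | mpVtx j ≠ w}) =>
      MeasurableSpace.comap (M.fam j) inferInstance) j hj)

lemma MPMRF.meas_fam_mS {w : V} {j : V ⊕ V × ℕ} (hj : mpVtx j = w) :
    Measurable[M.mS w] (M.fam j) :=
  measurable_iff_comap_le.mpr
    (le_iSup₂ (f := fun j (_ : j ∈ {j : V ⊕ V × ℕ | mpVtx j = w}) =>
      MeasurableSpace.comap (M.fam j) inferInstance) j hj)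

lemma MPMRF.indep_mS_mT (w : V) : Indep (M.mS w) (M.mT w) ℙ := by
  refine indep_iSup_of_disjoint (fun j => measurable_iff_comap_le.mp (M.meas_fam j)) ?_ ?_
  · exact (iIndepFun_iff_iIndep _ _ _).mp M.indep_fam
  · rw [Set.disjoint_left]
    intro j hj hj'
    exact hj' hj

lemma MPMRF.pa_ne_self {v : V} (hv : v ≠ M.root) : M.pa v ≠ v := by
  intro h
  have := M.pa_dist v hv
  rw [h] at this
  omega

lemma MPMRF.meas_N_mT {w : V} {B : Finset V} (hB : ∀ v ∈ B, v ≠ M.root → M.pa v ∈ B)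
    (hw : w ∉ B) : ∀ v ∈ B, Measurable[M.mT w] (M.N v) := by
  have hLm : ∀ u : V, u ≠ w → Measurable[M.mT w] (M.L u) := fun u hu =>
    M.meas_fam_mT (j := Sum.inl u) hu
  have hIm : ∀ (u : V) (i : ℕ), u ≠ w → Measurable[M.mT w] (M.I u i) := fun u i hu =>
    M.meas_fam_mT (j := Sum.inr (u, i)) hu
  suffices H : ∀ n, ∀ v ∈ B, G.dist M.root v ≤ n → Measurable[M.mT w] (M.N v) by
    intro v hv; exact H (G.dist M.root v) v hv le_rfl
  intro n
  induction n with
  | zero =>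
    intro v hv hd
    have hvr : v = M.root :=
      ((M.isTree.isConnected.dist_eq_zero_iff).mp (Nat.le_zero.mp hd)).symm
    subst hvr
    rw [M.N_root]
    exact hLm M.root (fun h => hw (h ▸ hv))
  | succ n ih =>
    intro v hv hd
    by_cases hvr : v = M.root
    · subst hvr
      rw [M.N_root]
      exact hLm M.root (fun h => hw (h ▸ hv))
    · have hpa : M.pa v ∈ B := hB v hv hvr
      have hdist : G.dist M.root (M.pa v) ≤ n := by
        have := M.pa_dist v hvr; omega
      have hK := ih (M.pa v) hpa hdist
      have hNv : M.N v = fun ω => (∑ i ∈ Finset.range (M.N (M.pa v) ω), M.I v i ω) + M.L v ω :=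
        funext fun ω => M.N_rec v hvr ω
      rw [hNv]
      have hvw : v ≠ w := fun h => hw (h ▸ hv)
      have hsum : Measurable[M.mT w] fun ω => ∑ i ∈ Finset.range (M.N (M.pa v) ω), M.I v i ω :=
        measurable_nat_cases hK
          (fun k => Finset.measurable_sum (Finset.range k) fun i _ => hIm v i hvw)
      exact hsum.add (hLm v hvw)

end MP
section Gen
variable {V : Type} [Fintype V] [DecidableEq V] {G : SimpleGraph V} {lam : ℝ}
  {alpha : Sym2 V → ℝ} {Ω : Type} [MeasureSpace Ω] [IsProbabilityMeasure (ℙ : Measure Ω)]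
  (M : MPMRF G lam alpha Ω)

lemma MPMRF.joint_pgf_gen :
    ∀ A : Finset V, (∀ v ∈ A, v ≠ M.root → M.pa v ∈ A) →
    ∀ s : V → ℝ, (∀ v, |s v| ≤ 1) → ∀ η : V → ℝ,
    (∀ v ∈ A, η v = s v * ∏ j ∈ A.filter (fun j => j ≠ M.root ∧ M.pa j = v),
        (1 - alpha s(v, j) + alpha s(v, j) * η j)) →
    ∫ ω, ∏ v ∈ A, s v ^ (M.N v ω) ∂ℙ
      = ∏ v ∈ A,
          Real.exp (lam * (1 - if v = M.root then 0 else alpha s(M.pa v, v)) * (η v - 1)) := by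
  classical
  intro A
  induction A using Finset.strongInduction with
  | _ A ih =>
  intro hA s hs η hη
  rcases A.eq_empty_or_nonempty with rfl | hAne
  · simp
  obtain ⟨w, hwA, hwmax⟩ := A.exists_max_image (fun v => G.dist M.root v) hAne
  by_cases hwr : w = M.root
  · -- the maximum of the distance is 0, so A = {root}
    have hA1 : A = {M.root} := by
      apply Finset.eq_singleton_iff_unique_mem.mpr
      refine ⟨hwr ▸ hwA, fun v hv => ?_⟩
      have h1 := hwmax v hv
      rw [hwr, SimpleGraph.dist_self] at h1
      exact (M.isTree.isConnected.dist_eq_zero_iff.mp (Nat.le_zero.mp h1)).symm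
    have hηr : η M.root = s M.root := by
      have h2 := hη M.root (by rw [hA1]; exact Finset.mem_singleton_self _)
      have h3 : A.filter (fun j => j ≠ M.root ∧ M.pa j = M.root) = ∅ := by
        rw [hA1]
        apply Finset.filter_eq_empty_iff.mpr
        intro j hj
        rw [Finset.mem_singleton] at hj
        rintro ⟨h4, _⟩
        exact h4 hj
      rw [h3] at h2
      simpa using h2
    rw [hA1]
    simp only [Finset.prod_singleton, if_pos rfl]
    have hint : ∫ ω, s M.root ^ M.N M.root ω ∂ℙ = Real.exp (lam * (s M.root - 1)) := by
      rw [M.N_root]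
      exact integral_pow_poisson (M.meas_L _) (le_of_lt M.lam_pos) M.L_root_poisson (hs _)
    rw [hint, hηr]
    norm_num
  · -- main case : w ≠ root has maximal distance, hence is a leaf of A
    have hedge : s(M.pa w, w) ∈ G.edgeSet := (SimpleGraph.mem_edgeSet G).mpr (M.pa_adj w hwr)
    have hαw : alpha s(M.pa w, w) ∈ Set.Icc (0:ℝ) 1 := M.alpha_mem _ hedge
    set αw := alpha s(M.pa w, w) with hαwdef
    set β := 1 - αw + αw * s w with hβdef
    have hsw := abs_le.mp (hs w)
    have hβabs : |β| ≤ 1 := by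
      rw [hβdef, abs_le]
      constructor <;> nlinarith [hαw.1, hαw.2, hsw.1, hsw.2]
    have hchild : ∀ j ∈ A, j ≠ M.root → M.pa j ≠ w := by
      intro j hj hjr hpj
      have h1 := hwmax j hj
      have h2 := M.pa_dist j hjr
      rw [hpj] at h2
      omega
    have hpaw_ne : M.pa w ≠ w := M.pa_ne_self hwr
    have hpawA : M.pa w ∈ A.erase w := Finset.mem_erase.mpr ⟨hpaw_ne, hA w hwA hwr⟩
    have hwnot : w ∉ A.erase w := Finset.notMem_erase w A
    have hA' : ∀ v ∈ A.erase w, v ≠ M.root → M.pa v ∈ A.erase w := by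
      intro v hv hvr
      rcases Finset.mem_erase.mp hv with ⟨hvw, hvA⟩
      exact Finset.mem_erase.mpr ⟨hchild v hvA hvr, hA v hvA hvr⟩
    have hηw : η w = s w := by
      rw [hη w hwA]
      have h3 : A.filter (fun j => j ≠ M.root ∧ M.pa j = w) = ∅ := by
        apply Finset.filter_eq_empty_iff.mpr
        rintro j hj ⟨h1, h2⟩
        exact hchild j hj h1 h2
      rw [h3]; simp
    set s' := Function.update s (M.pa w) (s (M.pa w) * β) with hs'def
    have hs' : ∀ v, |s' v| ≤ 1 := by
      intro v
      by_cases hv : v = M.pa w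
      · subst hv
        rw [hs'def, Function.update_self, abs_mul]
        have h1 := hs (M.pa w)
        nlinarith [abs_nonneg (s (M.pa w)), abs_nonneg β]
      · rw [hs'def, Function.update_of_ne hv]; exact hs v
    have hη' : ∀ v ∈ A.erase w, η v = s' v *
        ∏ j ∈ (A.erase w).filter (fun j => j ≠ M.root ∧ M.pa j = v),
          (1 - alpha s(v, j) + alpha s(v, j) * η j) := by
      intro v hv
      rcases Finset.mem_erase.mp hv with ⟨hvw, hvA⟩
      by_cases hvpa : v = M.pa w
      · subst hvpa
        have hfil : A.filter (fun j => j ≠ M.root ∧ M.pa j = M.pa w)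
            = insert w ((A.erase w).filter (fun j => j ≠ M.root ∧ M.pa j = M.pa w)) := by
          ext j
          simp only [Finset.mem_filter, Finset.mem_insert, Finset.mem_erase]
          constructor
          · rintro ⟨hjA, hj1, hj2⟩
            by_cases hjw : j = w
            · exact Or.inl hjw
            · exact Or.inr ⟨⟨hjw, hjA⟩, hj1, hj2⟩
          · rintro (rfl | ⟨⟨hjw, hjA⟩, hp⟩)
            · exact ⟨hwA, hwr, rfl⟩
            · exact ⟨hjA, hp⟩
        have hwnotf : w ∉ (A.erase w).filter (fun j => j ≠ M.root ∧ M.pa j = M.pa w) :=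
          fun h => hwnot (Finset.mem_filter.mp h).1
        rw [hη (M.pa w) hvA, hfil, Finset.prod_insert hwnotf, hηw, hs'def,
          Function.update_self]
        ring
      · rw [hs'def, Function.update_of_ne hvpa]
        have hfil : (A.erase w).filter (fun j => j ≠ M.root ∧ M.pa j = v)
            = A.filter (fun j => j ≠ M.root ∧ M.pa j = v) := by
          ext j
          simp only [Finset.mem_filter, Finset.mem_erase]
          constructor
          · rintro ⟨⟨_, hjA⟩, hp⟩; exact ⟨hjA, hp⟩
          · rintro ⟨hjA, h1, h2⟩
            refine ⟨⟨?_, hjA⟩, h1, h2⟩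
            rintro rfl
            exact hvpa h2.symm
        rw [hη v hvA, hfil]
    -- analytic part
    set K := M.N (M.pa w) with hKdef
    have hKmeas : Measurable K := M.meas_N _
    have hKmT : Measurable[M.mT w] K := M.meas_N_mT hA' hwnot (M.pa w) hpawA
    have hNmT : ∀ v ∈ A.erase w, Measurable[M.mT w] (M.N v) := M.meas_N_mT hA' hwnot
    set Gf := fun ω => ∏ v ∈ A.erase w, s v ^ M.N v ω with hGdef
    have hGmeas : Measurable Gf := Finset.measurable_prod _ (fun v _ =>
      (measurable_of_countable (fun n : ℕ => s v ^ n)).comp (M.meas_N v))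
    have hGmT : Measurable[M.mT w] Gf := Finset.measurable_prod _ (fun v hv =>
      (measurable_of_countable (fun n : ℕ => s v ^ n)).comp (hNmT v hv))
    have hbG : ∀ ω, |Gf ω| ≤ 1 := fun ω =>
      abs_prod_le_one _ _ (fun v _ => abs_pow_le_one _ (hs v))
    set c := Real.exp (lam * (1 - αw) * (s w - 1)) with hcdef
    have hmuw : 0 ≤ lam * (1 - αw) := mul_nonneg (le_of_lt M.lam_pos) (by linarith [hαw.2])
    have hLwint : ∫ ω, s w ^ M.L w ω ∂ℙ = c := by
      rw [hcdef, integral_pow_poisson (M.meas_L w) hmuw (M.L_poisson w hwr) (hs w)]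
    have hIwint : ∀ i, ∫ ω, s w ^ M.I w i ω ∂ℙ = β := fun i => by
      rw [hβdef]
      exact integral_pow_bern (M.meas_I w i) (M.I_le_one w i) hαw (M.I_bern w hwr i) (hs w)
    set φ : (V ⊕ V × ℕ) → Ω → ℝ := fun j ω => s w ^ (M.fam j ω) with hφdef
    have hφindep : iIndepFun φ ℙ :=
      M.indep_fam.comp (fun j n => s w ^ n) (fun j => measurable_of_countable _)
    have hφmeas : ∀ j, Measurable (φ j) := fun j =>
      (measurable_of_countable _).comp (M.meas_fam j)
    have hφbd : ∀ j ω, |φ j ω| ≤ 1 := fun j ω => abs_pow_le_one _ (hs w)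
    set Hk := fun (k : ℕ) (ω : Ω) => s w ^ M.L w ω * ∏ i ∈ Finset.range k, s w ^ M.I w i ω
      with hHkdef
    have hHkint : ∀ k : ℕ, ∫ ω, Hk k ω ∂ℙ = c * β ^ k := by
      intro k
      have hnm : (Sum.inl w : V ⊕ V × ℕ) ∉ (Finset.range k).image (fun i => Sum.inr (w, i)) := by
        simp
      have hinj : ∀ x ∈ Finset.range k, ∀ y ∈ Finset.range k,
          (fun i => (Sum.inr (w, i) : V ⊕ V × ℕ)) x = (fun i => (Sum.inr (w, i) : V ⊕ V × ℕ)) y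
            → x = y := by
        intro a _ b _ h; simpa using h
      have heq : Hk k = fun ω =>
          ∏ j ∈ insert (Sum.inl w) ((Finset.range k).image (fun i => Sum.inr (w, i))), φ j ω := by
        funext ω
        rw [Finset.prod_insert hnm, Finset.prod_image hinj]
        rfl
      rw [heq, integral_finset_prod_indep hφindep hφmeas hφbd,
        Finset.prod_insert hnm, Finset.prod_image hinj]
      have e1 : ∫ ω, φ (Sum.inl w) ω ∂ℙ = c := hLwint
      have e2 : ∀ i, ∫ ω, φ (Sum.inr (w, i)) ω ∂ℙ = β := fun i => hIwint i
      rw [e1, Finset.prod_congr rfl (fun i _ => e2 i), Finset.prod_const, Finset.card_range]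
    -- the key fiberwise identity
    have hfibint : ∀ k : ℕ,
        ∫ ω in K ⁻¹' {k}, Gf ω * Hk (K ω) ω ∂ℙ
          = c * ∫ ω in K ⁻¹' {k}, Gf ω * β ^ K ω ∂ℙ := by
      intro k
      have hSm : MeasurableSet (K ⁻¹' {k}) := hKmeas (measurableSet_singleton k)
      have hSmT : MeasurableSet[M.mT w] (K ⁻¹' {k}) := hKmT (measurableSet_singleton k)
      have e1 : ∫ ω in K ⁻¹' {k}, Gf ω * Hk (K ω) ω ∂ℙ
          = ∫ ω in K ⁻¹' {k}, Gf ω * Hk k ω ∂ℙ := by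
        apply setIntegral_congr_fun hSm
        intro ω hω
        show Gf ω * Hk (K ω) ω = Gf ω * Hk k ω
        have hk : K ω = k := hω
        rw [hk]
      have e2 : ∫ ω in K ⁻¹' {k}, Gf ω * β ^ K ω ∂ℙ = β ^ k * ∫ ω in K ⁻¹' {k}, Gf ω ∂ℙ := by
        have e2a : ∫ ω in K ⁻¹' {k}, Gf ω * β ^ K ω ∂ℙ
            = ∫ ω in K ⁻¹' {k}, β ^ k * Gf ω ∂ℙ := by
          apply setIntegral_congr_fun hSm
          intro ω hω
          show Gf ω * β ^ K ω = β ^ k * Gf ω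
          have hk : K ω = k := hω
          rw [hk]; ring
        rw [e2a, integral_const_mul]
      set G1 := (K ⁻¹' {k}).indicator Gf with hG1def
      have hG1mT : Measurable[M.mT w] G1 := hGmT.indicator hSmT
      have hG1meas : Measurable G1 := hGmeas.indicator hSm
      have hG1bd : ∀ ω, |G1 ω| ≤ 1 := by
        intro ω
        rw [hG1def]
        by_cases hω : ω ∈ K ⁻¹' {k}
        · rw [Set.indicator_of_mem hω]; exact hbG ω
        · rw [Set.indicator_of_notMem hω]; simp
      have hHkmS : Measurable[M.mS w] (Hk k) := by
        apply Measurable.mul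
        · exact (measurable_of_countable (fun n : ℕ => s w ^ n)).comp
            (M.meas_fam_mS (j := Sum.inl w) rfl)
        · exact Finset.measurable_prod _ (fun i _ =>
            (measurable_of_countable (fun n : ℕ => s w ^ n)).comp
              (M.meas_fam_mS (j := Sum.inr (w, i)) rfl))
      have hHkmeas : Measurable (Hk k) := by
        apply Measurable.mul
        · exact (measurable_of_countable (fun n : ℕ => s w ^ n)).comp (M.meas_L w)
        · exact Finset.measurable_prod _ (fun i _ =>
            (measurable_of_countable (fun n : ℕ => s w ^ n)).comp (M.meas_I w i))
      have hHkbd : ∀ ω, |Hk k ω| ≤ 1 := by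
        intro ω
        have h8 : Hk k ω = s w ^ M.L w ω * ∏ i ∈ Finset.range k, s w ^ M.I w i ω := rfl
        rw [h8, abs_mul]
        have b1 := abs_pow_le_one (M.L w ω) (hs w)
        have b2 := abs_prod_le_one (Finset.range k) _ (fun i (_ : i ∈ Finset.range k) =>
          abs_pow_le_one (M.I w i ω) (hs w))
        nlinarith [abs_nonneg (s w ^ M.L w ω),
          abs_nonneg (∏ i ∈ Finset.range k, s w ^ M.I w i ω)]
      have hindep : IndepFun G1 (Hk k) ℙ :=
        indepFun_of_meas_le ((M.indep_mS_mT w).symm) hG1mT hHkmS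
      have e3 : ∫ ω in K ⁻¹' {k}, Gf ω * Hk k ω ∂ℙ = ∫ ω, G1 ω * Hk k ω ∂ℙ := by
        rw [← integral_indicator hSm]
        congr 1
        funext ω
        rw [hG1def]
        by_cases hω : ω ∈ K ⁻¹' {k}
        · rw [Set.indicator_of_mem hω, Set.indicator_of_mem hω]
        · rw [Set.indicator_of_notMem hω, Set.indicator_of_notMem hω]; simp
      have hmulfun : (G1 * Hk k) = fun ω => G1 ω * Hk k ω := rfl
      have e4 : ∫ ω, G1 ω * Hk k ω ∂ℙ = (∫ ω, G1 ω ∂ℙ) * ∫ ω, Hk k ω ∂ℙ := by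
        have h7 := hindep.integral_mul_eq_mul_integral
          (integrable_of_abs_le_one' hG1meas.aestronglyMeasurable hG1bd).aestronglyMeasurable
          (integrable_of_abs_le_one' hHkmeas.aestronglyMeasurable hHkbd).aestronglyMeasurable
        rwa [hmulfun] at h7
      have e5 : ∫ ω, G1 ω ∂ℙ = ∫ ω in K ⁻¹' {k}, Gf ω ∂ℙ := by
        rw [hG1def, integral_indicator hSm]
      rw [e1, e3, e4, e5, hHkint k, e2]
      ring
    -- the full integrand
    have hfull : ∀ ω, ∏ v ∈ A, s v ^ M.N v ω = Gf ω * Hk (K ω) ω := by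
      intro ω
      rw [← Finset.mul_prod_erase A (fun v => s v ^ M.N v ω) hwA]
      rw [M.N_rec w hwr ω, pow_add, ← Finset.prod_pow_eq_pow_sum]
      ring
    have hGβ : ∀ ω, Gf ω * β ^ K ω = ∏ v ∈ A.erase w, s' v ^ M.N v ω := by
      intro ω
      have hGfω : Gf ω = ∏ v ∈ A.erase w, s v ^ M.N v ω := rfl
      rw [hGfω]
      rw [← Finset.mul_prod_erase (A.erase w) (fun v => s' v ^ M.N v ω) hpawA,
          ← Finset.mul_prod_erase (A.erase w) (fun v => s v ^ M.N v ω) hpawA]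
      have h6 : ∏ v ∈ (A.erase w).erase (M.pa w), s' v ^ M.N v ω
          = ∏ v ∈ (A.erase w).erase (M.pa w), s v ^ M.N v ω :=
        Finset.prod_congr rfl (fun v hv => by
          rw [hs'def, Function.update_of_ne (Finset.mem_erase.mp hv).1])
      rw [h6, hs'def, Function.update_self, mul_pow]
      ring
    have hmeasIpart : Measurable (fun ω => Hk (K ω) ω) := by
      apply measurable_nat_cases hKmeas
      intro k
      apply Measurable.mul
      · exact (measurable_of_countable (fun n : ℕ => s w ^ n)).comp (M.meas_L w)
      · exact Finset.measurable_prod _ (fun i _ =>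
          (measurable_of_countable (fun n : ℕ => s w ^ n)).comp (M.meas_I w i))
    have hfmeas : Measurable (fun ω => Gf ω * Hk (K ω) ω) := hGmeas.mul hmeasIpart
    have hfbd : ∀ ω, |Gf ω * Hk (K ω) ω| ≤ 1 := by
      intro ω
      have h8 : Hk (K ω) ω = s w ^ M.L w ω * ∏ i ∈ Finset.range (K ω), s w ^ M.I w i ω := rfl
      rw [h8, abs_mul, abs_mul]
      have b1 := hbG ω
      have b2 := abs_pow_le_one (M.L w ω) (hs w)
      have b3 := abs_prod_le_one (Finset.range (K ω)) _ (fun i (_ : i ∈ Finset.range (K ω)) =>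
        abs_pow_le_one (M.I w i ω) (hs w))
      exact mul_le_one₀ b1 (mul_nonneg (abs_nonneg _) (abs_nonneg _))
        (mul_le_one₀ b2 (abs_nonneg _) b3)
    have hfint : Integrable (fun ω => Gf ω * Hk (K ω) ω) ℙ :=
      integrable_of_abs_le_one' hfmeas.aestronglyMeasurable hfbd
    have hGβmeas : Measurable (fun ω => Gf ω * β ^ K ω) :=
      hGmeas.mul ((measurable_of_countable (fun n : ℕ => β ^ n)).comp hKmeas)
    have hGβbd : ∀ ω, |Gf ω * β ^ K ω| ≤ 1 := by
      intro ω
      rw [abs_mul]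
      nlinarith [hbG ω, abs_pow_le_one (K ω) hβabs, abs_nonneg (Gf ω), abs_nonneg (β ^ K ω)]
    have hGβint : Integrable (fun ω => Gf ω * β ^ K ω) ℙ :=
      integrable_of_abs_le_one' hGβmeas.aestronglyMeasurable hGβbd
    have hIH := ih (A.erase w) (Finset.erase_ssubset hwA) hA' s' hs' η hη'
    calc ∫ ω, ∏ v ∈ A, s v ^ M.N v ω ∂ℙ
        = ∫ ω, Gf ω * Hk (K ω) ω ∂ℙ := integral_congr_ae (ae_of_all _ hfull)
      _ = ∑' k, ∫ ω in K ⁻¹' {k}, Gf ω * Hk (K ω) ω ∂ℙ :=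
          integral_eq_tsum_fiber hKmeas hfint
      _ = ∑' k, c * ∫ ω in K ⁻¹' {k}, Gf ω * β ^ K ω ∂ℙ := tsum_congr hfibint
      _ = c * ∑' k, ∫ ω in K ⁻¹' {k}, Gf ω * β ^ K ω ∂ℙ := tsum_mul_left
      _ = c * ∫ ω, Gf ω * β ^ K ω ∂ℙ := by
          rw [← integral_eq_tsum_fiber hKmeas hGβint]
      _ = c * ∫ ω, ∏ v ∈ A.erase w, s' v ^ M.N v ω ∂ℙ := by
          congr 1
          exact integral_congr_ae (ae_of_all _ hGβ)
      _ = c * ∏ v ∈ A.erase w,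
            Real.exp (lam * (1 - if v = M.root then 0 else alpha s(M.pa v, v)) * (η v - 1)) := by
          rw [hIH]
      _ = ∏ v ∈ A,
            Real.exp (lam * (1 - if v = M.root then 0 else alpha s(M.pa v, v)) * (η v - 1)) := by
          rw [← Finset.mul_prod_erase A
            (fun v => Real.exp (lam * (1 - if v = M.root then 0 else alpha s(M.pa v, v)) * (η v - 1)))
            hwA, if_neg hwr, hηw, hcdef]
end Gen
/-- Joint pgf of the MPMRF: for `t ∈ [−1,1]^V` and `η : V → ℝ`
satisfying the recursion (from the leaves) `η v = t v * ∏_{j ∈ ch(v)} (1 − α_{(v,j)} +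
α_{(v,j)} η j)`, we have
`E[∏_v t_v ^ N_v] = ∏_v exp(λ (1 − α_{(pa v, v)}) (η v − 1))`,
with the convention `α_{(pa r, r)} = 0` at the root. -/
theorem mpmrf_joint_pgf {V : Type} [Fintype V] [DecidableEq V]
    (G : SimpleGraph V) (lam : ℝ) (alpha : Sym2 V → ℝ)
    (Ω : Type) [MeasureSpace Ω] [IsProbabilityMeasure (ℙ : Measure Ω)]
    (M : MPMRF G lam alpha Ω)
    (t : V → ℝ) (ht : ∀ v, t v ∈ Set.Icc (-1 : ℝ) 1)
    (η : V → ℝ)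
    (hη : ∀ v : V, η v
      = t v * ∏ j ∈ Finset.univ.filter (fun j => j ≠ M.root ∧ M.pa j = v),
          (1 - alpha s(v, j) + alpha s(v, j) * η j)) :
    ∫ ω, ∏ v : V, (t v : ℝ) ^ (M.N v ω) ∂ℙ
      = ∏ v : V,
          Real.exp (lam * (1 - if v = M.root then 0 else alpha s(M.pa v, v)) * (η v - 1)) := by
  exact M.joint_pgf_gen Finset.univ (fun v _ _ => Finset.mem_univ _) t
    (fun v => abs_le.mpr ⟨(ht v).1, (ht v).2⟩) η (fun v _ => hη v)
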